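/- Suppose an integral domain D contains a nonzero nonunit comparable element x, and let Q := ⋂_{n ≥ 0} x^n D. Then Q is a prime ideal of D, and D is a valuation domain if and only if the localization D_Q is a valuation domain. -/

import Mathlib

open scoped nonZeroDivisors

/-- A nonzero element `c` of a domain `D` is comparable if for every `x ∈ D`,
either `cD ⊆ xD` or `xD ⊆ cD`. -/
def IsComparable {D : Type*} [CommRing D] (c : D) : Prop :=
  c ≠ 0 ∧ ∀ x : D, Ideal.span {c} ≤ Ideal.span {x} ∨ Ideal.span {x} ≤ Ideal.span {c}

section Aux

variable {D : Type*} [CommRing D] [IsDomain D]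

lemma isComparable_iff_dvd {c : D} :
    IsComparable c ↔ c ≠ 0 ∧ ∀ y : D, y ∣ c ∨ c ∣ y := by
  simp [IsComparable, Ideal.span_singleton_le_span_singleton, Ideal.mem_span_singleton]

lemma IsComparable.mul {c d : D} (hc : IsComparable c) (hd : IsComparable d) :
    IsComparable (c * d) := by
  rw [isComparable_iff_dvd] at *
  refine ⟨mul_ne_zero hc.1 hd.1, fun y => ?_⟩
  rcases hc.2 y with h | ⟨y₁, rfl⟩
  · exact Or.inl (h.mul_right d)
  rcases hd.2 y₁ with ⟨e, he⟩ | ⟨e, rfl⟩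
  · exact Or.inl ⟨e, by rw [he]; ring⟩
  · exact Or.inr ⟨e, by ring⟩

lemma IsComparable.pow {x : D} (hx : IsComparable x) (n : ℕ) : IsComparable (x ^ n) := by
  induction n with
  | zero =>
    rw [pow_zero, isComparable_iff_dvd]
    exact ⟨one_ne_zero, fun y => Or.inr (one_dvd y)⟩
  | succ n ih => rw [pow_succ]; exact ih.mul hx

lemma dvd_or_dvd_of_dvd_comparable {c a b : D} (hc : IsComparable c)
    (ha : a ∣ c) (hb : b ∣ c) : a ∣ b ∨ b ∣ a := by
  rw [isComparable_iff_dvd] at hc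
  obtain ⟨a₁, rfl⟩ := ha
  obtain ⟨b₁, hb₁⟩ := hb
  have ha0 : a ≠ 0 := fun h => hc.1 (by simp [h])
  have ha₁0 : a₁ ≠ 0 := fun h => hc.1 (by simp [h])
  have hb₁0 : b₁ ≠ 0 := fun h => hc.1 (by simp [hb₁, h])
  rcases hc.2 (a * b₁) with ⟨d, hd⟩ | ⟨d, hd⟩
  · -- a*a₁ = a*b₁*d, and a*a₁ = b*b₁ so b*b₁ = a*b₁*d ⇒ b = a*d
    refine Or.inl ⟨d, mul_right_cancel₀ hb₁0 ?_⟩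
    rw [← hb₁, hd]; ring
  · -- a*b₁ = a*a₁*d ⇒ b₁ = a₁*d; b*b₁ = a*a₁ ⇒ b*a₁*d = a*a₁ ⇒ b*d = a
    have hb₁' : b₁ = a₁ * d := by
      apply mul_left_cancel₀ ha0
      rw [hd]; ring
    refine Or.inr ⟨d, mul_right_cancel₀ ha₁0 ?_⟩
    rw [hb₁, hb₁']; ring
end Aux

/-- Suppose an integral domain `D` contains a nonzero nonunit comparable element `x`,
and let `Q := ⋂_{n ≥ 0} xⁿD`. Then `Q` is a prime ideal of `D`, and `D` is a valuation
domain if and only if the localization `D_Q` is a valuation domain. -/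
theorem valuationRing_iff_localization_at_powers (D : Type*) [CommRing D] [IsDomain D]
    (x : D) (hx : IsComparable x) (hxu : ¬ IsUnit x)
    (Q : Ideal D) (hQ : Q = ⨅ n : ℕ, Ideal.span {x ^ n}) :
    ∃ hp : Q.IsPrime,
      (ValuationRing D ↔ (letI := hp; ValuationRing (Localization.AtPrime Q))) := by
  have hx0 : x ≠ 0 := hx.1
  have memQ : ∀ a : D, a ∈ Q ↔ ∀ n : ℕ, x ^ n ∣ a := by
    intro a
    simp [hQ, Ideal.mem_iInf, Ideal.mem_span_singleton]
  -- elements outside Q divide a power of x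
  have L3 : ∀ a : D, a ∉ Q → ∃ n, a ∣ x ^ n := by
    intro a ha
    rw [memQ] at ha
    push_neg at ha
    obtain ⟨n, hn⟩ := ha
    rcases (isComparable_iff_dvd.mp (hx.pow n)).2 a with h | h
    · exact ⟨n, h⟩
    · exact absurd h hn
  -- elements outside Q divide everything in Q
  have L4 : ∀ t q : D, t ∉ Q → q ∈ Q → t ∣ q := by
    intro t q ht hq
    obtain ⟨n, u, hu⟩ := L3 t ht
    obtain ⟨w, hw⟩ := (memQ q).mp hq n
    exact ⟨u * w, by rw [hw, hu]; ring⟩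
  -- comparability of two elements outside Q
  have L5 : ∀ a b : D, a ∉ Q → b ∉ Q → a ∣ b ∨ b ∣ a := by
    intro a b ha hb
    obtain ⟨n, hn⟩ := L3 a ha
    obtain ⟨m, hm⟩ := L3 b hb
    exact dvd_or_dvd_of_dvd_comparable (hx.pow (n + m))
      (hn.trans (pow_dvd_pow x (Nat.le_add_right n m)))
      (hm.trans (pow_dvd_pow x (Nat.le_add_left m n)))
  have hp : Q.IsPrime := by
    constructor
    · intro h
      have h1 : (1 : D) ∈ Q := h ▸ Submodule.mem_top
      obtain ⟨r, hr⟩ := (memQ 1).mp h1 1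
      rw [pow_one] at hr
      exact hxu (IsUnit.of_mul_eq_one (a := x) r hr.symm)
    · intro a b hab
      by_contra hcon
      push_neg at hcon
      obtain ⟨ha, hb⟩ := hcon
      obtain ⟨n, a', ha'⟩ := L3 a ha
      obtain ⟨m, b', hb'⟩ := L3 b hb
      obtain ⟨r, hr⟩ := (memQ (a * b)).mp hab (n + m + 1)
      have key : x ^ (n + m) * 1 = x ^ (n + m) * (x * (r * (a' * b'))) := by
        rw [pow_add, ha', hb']
        rw [mul_one]
        calc a * a' * (b * b') = (a * b) * (a' * b') := by ring
          _ = x ^ (n + m + 1) * r * (a' * b') := by rw [hr]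
          _ = x ^ n * x ^ m * (x * (r * (a' * b'))) := by rw [pow_add, pow_add, pow_one]; ring
        rw [ha', hb']
      have : (1 : D) = x * (r * (a' * b')) :=
        mul_left_cancel₀ (pow_ne_zero _ hx0) key
      exact hxu (IsUnit.of_mul_eq_one (a := x) (r * (a' * b')) this.symm)
  refine ⟨hp, ?_⟩
  constructor
  · -- forward: D valuation ⇒ localization valuation
    intro hD
    rw [ValuationRing.iff_dvd_total] at hD ⊢
    constructor
    intro f g
    obtain ⟨⟨a, s⟩, rfl⟩ := IsLocalization.mk'_surjective Q.primeCompl f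
    obtain ⟨⟨b, t⟩, rfl⟩ := IsLocalization.mk'_surjective Q.primeCompl g
    have hst : ∀ (u : Q.primeCompl), IsUnit (algebraMap D (Localization.AtPrime Q) u) :=
      IsLocalization.map_units _
    rcases hD.total (a * t) (b * s) with ⟨d, hd⟩ | ⟨d, hd⟩
    · left
      refine ⟨algebraMap D _ d, ?_⟩
      have hs := IsLocalization.mk'_spec (Localization.AtPrime Q) a s
      have ht := IsLocalization.mk'_spec (Localization.AtPrime Q) b t
      apply ((hst s).mul (hst t)).mul_left_cancel
      symm
      calc (algebraMap D _ s * algebraMap D _ t) * (IsLocalization.mk' _ a s * algebraMap D _ d)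
          = (IsLocalization.mk' (Localization.AtPrime Q) a s * algebraMap D _ s) *
              algebraMap D _ t * algebraMap D _ d := by ring
        _ = algebraMap D _ (a * t * d) := by rw [hs, map_mul, map_mul]
        _ = algebraMap D _ (b * s) := by rw [← hd]
        _ = (IsLocalization.mk' (Localization.AtPrime Q) b t * algebraMap D _ t) *
              algebraMap D _ s := by rw [ht, map_mul]
        _ = (algebraMap D _ s * algebraMap D _ t) * IsLocalization.mk' _ b t := by ring
    · right
      refine ⟨algebraMap D _ d, ?_⟩
      have hs := IsLocalization.mk'_spec (Localization.AtPrime Q) a s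
      have ht := IsLocalization.mk'_spec (Localization.AtPrime Q) b t
      apply ((hst s).mul (hst t)).mul_left_cancel
      symm
      calc (algebraMap D _ s * algebraMap D _ t) * (IsLocalization.mk' _ b t * algebraMap D _ d)
          = (IsLocalization.mk' (Localization.AtPrime Q) b t * algebraMap D _ t) *
              algebraMap D _ s * algebraMap D _ d := by ring
        _ = algebraMap D _ (b * s * d) := by rw [ht, map_mul, map_mul]
        _ = algebraMap D _ (a * t) := by rw [← hd]
        _ = (IsLocalization.mk' (Localization.AtPrime Q) a s * algebraMap D _ s) *
              algebraMap D _ t := by rw [hs, map_mul]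
        _ = (algebraMap D _ s * algebraMap D _ t) * IsLocalization.mk' _ a s := by ring
  · -- reverse
    intro hL
    rw [ValuationRing.iff_dvd_total] at hL ⊢
    -- helper: divisibility in localization + a ∈ Q gives comparability in D
    have helper : ∀ a b : D, a ∈ Q →
        (algebraMap D (Localization.AtPrime Q) a ∣ algebraMap D (Localization.AtPrime Q) b) →
        a ∣ b ∨ b ∣ a := by
      intro a b haQ hdvd
      obtain ⟨z, hz⟩ := hdvd
      obtain ⟨⟨c, s⟩, rfl⟩ := IsLocalization.mk'_surjective Q.primeCompl z
      have hs := IsLocalization.mk'_spec (Localization.AtPrime Q) c s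
      have heq : algebraMap D (Localization.AtPrime Q) (b * s) =
          algebraMap D (Localization.AtPrime Q) (a * c) := by
        rw [map_mul, map_mul, hz]
        calc algebraMap D _ a * IsLocalization.mk' _ c s * algebraMap D _ s
            = algebraMap D _ a * (IsLocalization.mk' (Localization.AtPrime Q) c s *
                algebraMap D _ s) := by ring
          _ = algebraMap D _ a * algebraMap D _ c := by rw [hs]
      obtain ⟨u, hu⟩ := (IsLocalization.eq_iff_exists Q.primeCompl _).mp heq
      -- (u*s) * b = a * (u*c)
      set T : D := (u : D) * (s : D) with hT
      have hTQ : T ∉ Q := Submonoid.mul_mem _ u.2 s.2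
      have hTb : T * b = a * ((u : D) * c) := by
        rw [hT]
        calc (u:D) * (s:D) * b = (u:D) * (b * (s:D)) := by ring
          _ = (u:D) * (a * c) := hu
          _ = a * ((u:D) * c) := by ring
      have hT0 : T ≠ 0 := fun h => hTQ (h ▸ Q.zero_mem)
      obtain ⟨a₀, ha₀⟩ := L4 T a hTQ haQ
      set c' : D := (u : D) * c with hc'
      have hb : b = a₀ * c' := by
        apply mul_left_cancel₀ hT0
        rw [hTb, ha₀]; ring
      by_cases hc'Q : c' ∈ Q
      · obtain ⟨c₁, hc₁⟩ := L4 T c' hTQ hc'Q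
        exact Or.inl ⟨c₁, by rw [hb, hc₁, ha₀]; ring⟩
      · rcases L5 T c' hTQ hc'Q with ⟨c₁, hc₁⟩ | ⟨e, he⟩
        · exact Or.inl ⟨c₁, by rw [hb, hc₁, ha₀]; ring⟩
        · -- T = c' * e, T*b = a*c' ⇒ e*b = a (cancel c')
          have hc'0 : c' ≠ 0 := fun h => hc'Q (h ▸ Q.zero_mem)
          refine Or.inr ⟨e, mul_left_cancel₀ hc'0 ?_⟩
          symm
          calc c' * (b * e) = (c' * e) * b := by ring
            _ = T * b := by rw [← he]
            _ = a * c' := hTb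
            _ = c' * a := by ring
    constructor
    intro a b
    by_cases ha : a ∈ Q <;> by_cases hb : b ∈ Q
    · rcases hL.total (algebraMap D (Localization.AtPrime Q) a)
        (algebraMap D (Localization.AtPrime Q) b) with h | h
      · exact helper a b ha h
      · exact (helper b a hb h).symm
    · exact Or.inr (L4 b a hb ha)
    · exact Or.inl (L4 a b ha hb)
    · exact L5 a b ha hb
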